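/- arXiv:1712.00780 — 3 statements merged into one kernel-verified Lean document; each statement's English description precedes it below -/
import Mathlib

section
/- If a subset A ⊆ ∂F is a union of finitely many shadows, then only finitely many lines in L have exactly one of their two endpoints in A. -/
open scoped BigOperators

namespace DecompPaper

variable (B : Type) [DecidableEq B]

/-- The set of letters `B ⊔ B⁻¹` carries the discrete topology. -/
instance : TopologicalSpace (B × Bool) := ⊥

/-- The Gromov boundary `∂F` of the free group on `B`: the space of infinite reduced
words, i.e. sequences of letters with no cancelling adjacent pair, topologized as a
subspace of the product of discrete spaces. -/
abbrev Boundary : Type :=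
  {s : ℕ → B × Bool // ∀ k, s (k + 1) ≠ ((s k).1, !(s k).2)}

/-- The prefix of length `m` of an infinite reduced word, as an element of the free group. -/
def prefixOf (ξ : Boundary B) (m : ℕ) : FreeGroup B :=
  FreeGroup.mk (List.ofFn fun i : Fin m => ξ.1 i)

/-- Adjacency in the Cayley graph `T` of the free group with respect to `B`. -/
def Adj (g h : FreeGroup B) : Prop :=
  ∃ x : B × Bool, h = g * FreeGroup.mk [x]

/-- A set of vertices of `T` is a subtree iff any two of its vertices are joined by a
path in the Cayley graph staying inside the set. -/
def IsSubtree (X : Set (FreeGroup B)) : Prop :=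
  ∀ g ∈ X, ∀ h ∈ X, Relation.ReflTransGen (fun a b => Adj B a b ∧ b ∈ X) g h

/-- `C` is a connected component of `T ∖ X`. -/
def IsComponentOf (X C : Set (FreeGroup B)) : Prop :=
  ∃ v, v ∉ X ∧
    C = {u | Relation.ReflTransGen (fun a b => Adj B a b ∧ a ∉ X ∧ b ∉ X) v u}

/-- `∂C`: the set of boundary points all of whose sufficiently long prefixes lie in `C`. -/
def boundaryOf (C : Set (FreeGroup B)) : Set (Boundary B) :=
  {ξ | ∃ m, ∀ k, m ≤ k → prefixOf B ξ k ∈ C}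

/-- The sequence `a` of group elements converges to the boundary point `ξ`:
every prefix of `ξ` is eventually an initial segment of the reduced word of `a k`. -/
def TendstoBoundary (a : ℕ → FreeGroup B) (ξ : Boundary B) : Prop :=
  ∀ m : ℕ, ∃ K, ∀ k, K ≤ k → (List.ofFn fun i : Fin m => ξ.1 i) <+: (a k).toWord

/-- `{ξ, η}` is a line of the line pattern generated by the words `w i`: for some
`g` and `i`, `ξ` and `η` are the limits of `g * (w i) ^ k` as `k → +∞` and `k → -∞`
(in one of the two orders). -/
def IsLine {r : ℕ} (w : Fin r → FreeGroup B) (ξ η : Boundary B) : Prop :=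
  ∃ (g : FreeGroup B) (i : Fin r),
    (TendstoBoundary B (fun k => g * w i ^ k) ξ ∧
       TendstoBoundary B (fun k => g * (w i)⁻¹ ^ k) η) ∨
    (TendstoBoundary B (fun k => g * w i ^ k) η ∧
       TendstoBoundary B (fun k => g * (w i)⁻¹ ^ k) ξ)

/-- Malnormality of the family of cyclic subgroups `⟨w i⟩`. -/
def Malnormal {r : ℕ} (w : Fin r → FreeGroup B) : Prop :=
  ∀ (g : FreeGroup B) (i j : Fin r),
    (∃ x : FreeGroup B, x ∈ Subgroup.zpowers (w i) ∧ x ≠ 1 ∧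
        g * x * g⁻¹ ∈ Subgroup.zpowers (w j)) →
      i = j ∧ g ∈ Subgroup.zpowers (w i)

/-- The decomposition space `D`: the quotient of `∂F` by the smallest equivalence
relation identifying the two endpoints of each line, with the quotient topology. -/
abbrev DSpace {r : ℕ} (w : Fin r → FreeGroup B) : Type :=
  Quot (IsLine B w)

/-- The quotient projection `q : ∂F → D`. -/
def qmap {r : ℕ} (w : Fin r → FreeGroup B) : Boundary B → DSpace B w :=
  Quot.mk _

/-- The geodesic of the line with endpoints `ξ` and `η`: all prefixes of `ξ` or of `η`
of length at least the length of their longest common initial segment. -/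
def lineGeodesic (ξ η : Boundary B) : Set (FreeGroup B) :=
  {g | ∃ k : ℕ, (g = prefixOf B ξ k ∨ g = prefixOf B η k) ∧ ∃ i ≤ k, ξ.1 i ≠ η.1 i}

/-- The line with endpoints `ξ, η` passes through the subtree `X`. -/
def PassesThrough (ξ η : Boundary B) (X : Set (FreeGroup B)) : Prop :=
  ∃ g ∈ X, g ∈ lineGeodesic B ξ η

/-- A function `σ : D → ℤ` is supported on the subtree `X` if `σ ∘ q` is constant on
`∂C` for every connected component `C` of `T ∖ X`. -/
def SupportedOn {r : ℕ} (w : Fin r → FreeGroup B) (σ : DSpace B w → ℤ)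
    (X : Set (FreeGroup B)) : Prop :=
  ∀ C : Set (FreeGroup B), IsComponentOf B X C →
    ∀ ξ, ξ ∈ boundaryOf B C → ∀ η, η ∈ boundaryOf B C →
      σ (qmap B w ξ) = σ (qmap B w η)

/-- Prepending a letter to an infinite reduced word, cancelling if necessary. -/
def consB (x : B × Bool) (ξ : Boundary B) : Boundary B :=
  if h : ξ.1 0 = (x.1, !x.2) then
    ⟨fun k => ξ.1 (k + 1), fun k => ξ.2 (k + 1)⟩
  else
    ⟨fun k => Nat.rec x (fun j _ => ξ.1 j) k, by
      intro k
      cases k with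
      | zero => exact h
      | succ j => exact ξ.2 j⟩

/-- The action of the free group on its boundary: left multiplication followed by
reduction. -/
def actB (g : FreeGroup B) (ξ : Boundary B) : Boundary B :=
  g.toWord.foldr (consB B) ξ

/-- The induced action of the free group on the decomposition space. -/
noncomputable def actD {r : ℕ} (w : Fin r → FreeGroup B) (g : FreeGroup B)
    (x : DSpace B w) : DSpace B w :=
  qmap B w (actB B g (Quot.out x))

/-- The map `p : (ℤ[F])^k → C(D, ℤ)` of right `ℤ[F]`-modules determined by generators
`σ j`, where an element of the free module `(ℤ[F])^k` is recorded as a finitely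
supported function `(Fin k × F) →₀ ℤ` and `e_j · g` is sent to `σ j · g`. -/
noncomputable def pMap {r : ℕ} (w : Fin r → FreeGroup B) {k : ℕ}
    (σ : Fin k → DSpace B w → ℤ) (x : (Fin k × FreeGroup B) →₀ ℤ) :
    DSpace B w → ℤ :=
  fun d => x.sum fun p n => n * σ p.1 (actD B w p.2 d)

/-- Right translation by `g` on the free module `(ℤ[F])^k`, sending `e_j · h` to
`e_j · (h * g)`. -/
noncomputable def fsTranslate {k : ℕ} (y : (Fin k × FreeGroup B) →₀ ℤ)
    (g : FreeGroup B) : (Fin k × FreeGroup B) →₀ ℤ :=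
  Finsupp.mapDomain (fun p => (p.1, p.2 * g)) y

/-- The convex hull of a set of vertices of `T`: the smallest subtree containing it. -/
def hull (S : Set (FreeGroup B)) : Set (FreeGroup B) :=
  ⋂₀ {Y : Set (FreeGroup B) | IsSubtree B Y ∧ S ⊆ Y}

/-- The support of an element of the free module `(ℤ[F])^k`, relative to supports
`X j` of the generators: the convex hull of the union of the sets `g⁻¹ • X j` over
the pairs `(j, g)` appearing with nonzero coefficient. -/
def fsSupport {k : ℕ} (X : Fin k → Set (FreeGroup B))
    (x : (Fin k × FreeGroup B) →₀ ℤ) : Set (FreeGroup B) :=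
  hull B (⋃ p ∈ x.support, (fun v => p.2⁻¹ * v) '' X p.1)

/-- Antisymmetry of a `1`-cochain on oriented lines. -/
def Antisym {r : ℕ} (w : Fin r → FreeGroup B)
    (f : Boundary B → Boundary B → ℤ) : Prop :=
  ∀ ξ η, IsLine B w ξ η → f η ξ = -f ξ η

/-- A `1`-cochain is supported on the subtree `X`: it vanishes on lines not passing
through `X`, and depends only on the pair of components of `T ∖ X` containing the two
endpoints. -/
def SupportedOn1 {r : ℕ} (w : Fin r → FreeGroup B)
    (f : Boundary B → Boundary B → ℤ) (X : Set (FreeGroup B)) : Prop :=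
  (∀ ξ η, IsLine B w ξ η → ¬PassesThrough B ξ η X → f ξ η = 0) ∧
  (∀ C C' : Set (FreeGroup B), IsComponentOf B X C → IsComponentOf B X C' → C ≠ C' →
    ∀ ξ ξ' η η', IsLine B w ξ η → IsLine B w ξ' η' →
      ξ ∈ boundaryOf B C → ξ' ∈ boundaryOf B C →
      η ∈ boundaryOf B C' → η' ∈ boundaryOf B C' →
      f ξ η = f ξ' η')

/-- Membership in `C¹`: an antisymmetric integer-valued function on oriented lines
supported on at least one finite nonempty subtree of `T`. -/
def MemC1 {r : ℕ} (w : Fin r → FreeGroup B)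
    (f : Boundary B → Boundary B → ℤ) : Prop :=
  Antisym B w f ∧
    ∃ X : Set (FreeGroup B), X.Finite ∧ X.Nonempty ∧ IsSubtree B X ∧
      SupportedOn1 B w f X

/-- The ball of radius `R` about a set `Y` of vertices of `T` (word metric). -/
def ballAbout (Y : Set (FreeGroup B)) (R : ℕ) : Set (FreeGroup B) :=
  {g | ∃ y ∈ Y, (y⁻¹ * g).toWord.length ≤ R}

/-- The map `p : (ℤ[F])^k → C¹` of right `ℤ[F]`-modules determined by generators
`f j`, sending `e_j · g` to `f j · g`. -/
noncomputable def pC1 {k : ℕ} (f : Fin k → Boundary B → Boundary B → ℤ)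
    (x : (Fin k × FreeGroup B) →₀ ℤ) : Boundary B → Boundary B → ℤ :=
  fun ξ η => x.sum fun p n => n * f p.1 (actB B p.2 ξ) (actB B p.2 η)

/-- `σ : ∂F → ℤ` is constant on `∂C` for every connected component `C` of `T ∖ X`. -/
def ConstOnComponents (X : Set (FreeGroup B)) (σ : Boundary B → ℤ) : Prop :=
  ∀ C : Set (FreeGroup B), IsComponentOf B X C →
    ∀ ξ, ξ ∈ boundaryOf B C → ∀ η, η ∈ boundaryOf B C → σ ξ = σ η

/-- The shadow `S(g) ⊆ ∂F` of a nontrivial group element `g`: the boundary points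
having the reduced word of `g` as an initial segment. -/
def shadow (g : FreeGroup B) : Set (Boundary B) :=
  {ξ | prefixOf B ξ g.toWord.length = g}

end DecompPaper

open DecompPaper

section AuxForStatement3

open FreeGroup List DecompPaper

variable {α : Type*} [DecidableEq α]

/-- A word is reduced: no adjacent cancelling pair. -/
private def RedW (L : List (α × Bool)) : Prop :=
  List.Chain' (fun a b => ¬(a.1 = b.1 ∧ a.2 = !b.2)) L

private lemma redW_reduce (L : List (α × Bool)) : RedW (FreeGroup.reduce L) := by
  induction L with
  | nil => exact List.IsChain.nil
  | cons x L ih =>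
    rw [FreeGroup.reduce.cons]
    rcases hL : FreeGroup.reduce L with _ | ⟨hd, tl⟩
    · exact List.isChain_singleton x
    · rw [hL] at ih
      show RedW (if x.1 = hd.1 ∧ x.2 = !hd.2 then tl else x :: hd :: tl)
      by_cases h : x.1 = hd.1 ∧ x.2 = !hd.2
      · rw [if_pos h]; exact ih.tail
      · rw [if_neg h]; exact List.IsChain.cons_cons h ih

private lemma reduce_eq_self {L : List (α × Bool)} (h : RedW L) : FreeGroup.reduce L = L := by
  induction L with
  | nil => rfl
  | cons x L ih =>
    rw [FreeGroup.reduce.cons, ih h.tail]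
    rcases L with _ | ⟨hd, tl⟩
    · rfl
    · have hne : ¬(x.1 = hd.1 ∧ x.2 = !hd.2) := h.rel_head
      show (if x.1 = hd.1 ∧ x.2 = !hd.2 then tl else x :: hd :: tl) = _
      rw [if_neg hne]

private lemma toWord_mk_eq {L : List (α × Bool)} (h : RedW L) : (FreeGroup.mk L).toWord = L := by
  rw [FreeGroup.toWord_mk, reduce_eq_self h]

private lemma redW_toWord (x : FreeGroup α) : RedW x.toWord := by
  rw [← FreeGroup.reduce_toWord]; exact redW_reduce _

/-- Common prefix length of two lists. -/
private def cpl : List α → List α → ℕ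
  | a :: X, b :: Y => if a = b then cpl X Y + 1 else 0
  | _, _ => 0

private lemma cpl_le_left : ∀ (X Y : List α), cpl X Y ≤ X.length
  | [], _ => by simp [cpl]
  | a :: X, [] => by simp [cpl]
  | a :: X, b :: Y => by
    by_cases h : a = b <;> simp [cpl, h]
    · exact cpl_le_left X Y

private lemma cpl_le_right : ∀ (X Y : List α), cpl X Y ≤ Y.length
  | [], _ => by simp [cpl]
  | a :: X, [] => by simp [cpl]
  | a :: X, b :: Y => by
    by_cases h : a = b <;> simp [cpl, h]
    · exact cpl_le_right X Y

private lemma take_cpl : ∀ (X Y : List α), X.take (cpl X Y) = Y.take (cpl X Y)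
  | [], Y => by simp [cpl]
  | a :: X, [] => by simp [cpl]
  | a :: X, b :: Y => by
    by_cases h : a = b <;> simp [cpl, h]
    exact take_cpl X Y

private lemma getElem_cpl_ne : ∀ (X Y : List α) (hx : cpl X Y < X.length)
    (hy : cpl X Y < Y.length), X[cpl X Y] ≠ Y[cpl X Y]
  | [], Y => by simp [cpl]
  | a :: X, [] => by simp [cpl]
  | a :: X, b :: Y => by
    intro hx hy
    by_cases h : a = b
    · subst h
      simp [cpl] at hx hy ⊢
      exact getElem_cpl_ne X Y (by omega) (by omega)
    · simp [cpl, h] at hx hy ⊢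

private lemma cpl_prefix : ∀ (X H Y : List α), H <+: Y → cpl X H = min (cpl X Y) H.length
  | [], H, Y, _ => by simp [cpl]
  | a :: X, [], Y, _ => by simp [cpl]
  | a :: X, b :: H, [], hp => by simp at hp
  | a :: X, b :: H, c :: Y, hp => by
    rw [List.cons_prefix_cons] at hp
    obtain ⟨rfl, hp⟩ := hp
    by_cases h : a = b <;> simp [cpl, h]
    rw [cpl_prefix X H Y hp]

private lemma redW_invRev {L : List (α × Bool)} (h : RedW L) : RedW (FreeGroup.invRev L) := by
  unfold FreeGroup.invRev RedW List.Chain'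
  rw [List.isChain_reverse, List.isChain_map]
  refine h.imp ?_
  rintro ⟨a1, a2⟩ ⟨b1, b2⟩ hab ⟨h1, h2⟩
  exact hab ⟨h1.symm, by simpa using h2.symm⟩

private lemma key_len {X Y : List (α × Bool)} (hX : RedW X) (hY : RedW Y) :
    ((FreeGroup.mk X)⁻¹ * FreeGroup.mk Y).toWord.length + 2 * cpl X Y
      = X.length + Y.length := by
  set c := cpl X Y with hc
  have hcX := cpl_le_left X Y
  have hcY := cpl_le_right X Y
  have h1 : FreeGroup.mk X = FreeGroup.mk (X.take c) * FreeGroup.mk (X.drop c) := by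
    rw [FreeGroup.mul_mk, List.take_append_drop]
  have h2 : FreeGroup.mk Y = FreeGroup.mk (X.take c) * FreeGroup.mk (Y.drop c) := by
    rw [FreeGroup.mul_mk, take_cpl, List.take_append_drop]
  have hmul : (FreeGroup.mk X)⁻¹ * FreeGroup.mk Y
      = FreeGroup.mk (FreeGroup.invRev (X.drop c) ++ Y.drop c) := by
    rw [h1, h2, ← FreeGroup.mul_mk, ← FreeGroup.inv_mk]
    group
  have hred : RedW (FreeGroup.invRev (X.drop c) ++ Y.drop c) := by
    refine List.isChain_append.2 ⟨redW_invRev (hX.drop c), hY.drop c, ?_⟩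
    intro x hx y hy
    have hXne : X.drop c ≠ [] := by
      rintro hnil
      rw [FreeGroup.invRev, hnil] at hx
      simp at hx
    have hYne : Y.drop c ≠ [] := by
      rintro hnil; rw [hnil] at hy; simp at hy
    have hcXlt : c < X.length := by
      rw [← List.length_pos_iff_ne_nil] at hXne; simp at hXne; omega
    have hcYlt : c < Y.length := by
      rw [← List.length_pos_iff_ne_nil] at hYne; simp at hYne; omega
    have hxval : x = ((X[c]).1, !(X[c]).2) := by
      rw [FreeGroup.invRev, List.getLast?_reverse, List.head?_map] at hx
      rw [List.head?_drop] at hx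
      simp [List.getElem?_eq_getElem hcXlt] at hx
      exact hx.symm
    have hyval : y = Y[c] := by
      rw [List.head?_drop] at hy
      simp [List.getElem?_eq_getElem hcYlt] at hy
      exact hy.symm
    rintro ⟨e1, e2⟩
    apply getElem_cpl_ne X Y hcXlt hcYlt
    rw [hxval] at e1 e2
    rw [hyval] at e1 e2
    simp at e1 e2
    exact Prod.ext e1 e2
  rw [hmul, toWord_mk_eq hred, List.length_append, FreeGroup.invRev_length,
    List.length_drop, List.length_drop]
  omega

private lemma key_len' (x y : FreeGroup α) :
    (x⁻¹ * y).toWord.length + 2 * cpl x.toWord y.toWord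
      = x.toWord.length + y.toWord.length := by
  have := key_len (redW_toWord x) (redW_toWord y)
  rwa [FreeGroup.mk_toWord, FreeGroup.mk_toWord] at this

private lemma dist_le {x y h : FreeGroup α} (hy : h.toWord <+: y.toWord)
    (hx : ¬ h.toWord <+: x.toWord) :
    (x⁻¹ * h).toWord.length ≤ (x⁻¹ * y).toWord.length := by
  have e1 := key_len' x y
  have e2 := key_len' x h
  have hHY : h.toWord.length ≤ y.toWord.length := hy.length_le
  have hc : cpl x.toWord h.toWord = min (cpl x.toWord y.toWord) h.toWord.length :=
    cpl_prefix _ _ _ hy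
  have hlt : cpl x.toWord h.toWord < h.toWord.length := by
    rcases Nat.lt_or_ge (cpl x.toWord h.toWord) h.toWord.length with h1 | h1
    · exact h1
    · exfalso
      have hEq : cpl x.toWord h.toWord = h.toWord.length :=
        le_antisymm (cpl_le_right _ _) h1
      apply hx
      have ht := take_cpl x.toWord h.toWord
      rw [hEq, List.take_length] at ht
      rw [← ht]
      exact List.take_prefix _ _
  omega

variable {B : Type} [DecidableEq B]

private lemma redW_ofFn (ξ : Boundary B) (m : ℕ) :
    RedW (List.ofFn fun i : Fin m => ξ.1 i) := by
  unfold RedW List.Chain'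
  rw [List.isChain_iff_getElem]
  intro i hi
  simp only [List.getElem_ofFn, List.length_ofFn] at *
  rintro ⟨h1, h2⟩
  apply ξ.2 i
  refine Prod.ext ?_ ?_
  · simpa using h1.symm
  · simp only []
    rw [show (ξ.1 i).2 = !(ξ.1 (i+1)).2 by simpa using h2, Bool.not_not]

private lemma prefixOf_toWord (ξ : Boundary B) (m : ℕ) :
    (prefixOf B ξ m).toWord = List.ofFn fun i : Fin m => ξ.1 i :=
  toWord_mk_eq (redW_ofFn ξ m)

private lemma shadow_iff {ξ : Boundary B} {h : FreeGroup B} :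
    ξ ∈ shadow B h ↔ (List.ofFn fun i : Fin h.toWord.length => ξ.1 i) = h.toWord := by
  rw [shadow, Set.mem_setOf_eq, ← FreeGroup.toWord_inj, prefixOf_toWord]

private lemma tb_unique {a : ℕ → FreeGroup B} {ξ ξ' : Boundary B}
    (h : TendstoBoundary B a ξ) (h' : TendstoBoundary B a ξ') : ξ = ξ' := by
  apply Subtype.ext; funext j
  obtain ⟨K, hK⟩ := h (j + 1)
  obtain ⟨K', hK'⟩ := h' (j + 1)
  have p1 := hK (max K K') (le_max_left _ _)
  have p2 := hK' (max K K') (le_max_right _ _)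
  have hle : (List.ofFn fun i : Fin (j+1) => ξ.1 i).length
      ≤ (List.ofFn fun i : Fin (j+1) => ξ'.1 i).length := by simp
  have heq : (List.ofFn fun i : Fin (j+1) => ξ.1 i)
      = List.ofFn fun i : Fin (j+1) => ξ'.1 i :=
    (List.prefix_of_prefix_length_le p1 p2 hle).eq_of_length (by simp)
  have := List.ofFn_inj.1 heq
  exact congrFun this ⟨j, Nat.lt_succ_self j⟩

private lemma tb_shift {g u : FreeGroup B} {ξ : Boundary B}
    (h : TendstoBoundary B (fun k => g * u ^ k) ξ) (n : ℤ) :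
    TendstoBoundary B (fun k => (g * u ^ n) * u ^ k) ξ := by
  intro m
  obtain ⟨K, hK⟩ := h m
  refine ⟨K + n.natAbs, fun k hk => ?_⟩
  have hnk : (0:ℤ) ≤ n + k := by omega
  have h3 : K ≤ (n + (k:ℤ)).toNat := by omega
  have heq : (g * u ^ n) * u ^ k = g * u ^ ((n + (k:ℤ)).toNat) := by
    rw [mul_assoc, ← zpow_natCast u k, ← zpow_add, ← zpow_natCast u ((n + (k:ℤ)).toNat)]
    congr 2
    omega
  show (List.ofFn fun i : Fin m => ξ.1 i) <+: ((g * u ^ n) * u ^ k).toWord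
  rw [heq]
  exact hK _ h3

private lemma int_ivt {P : ℤ → Prop} {a b : ℤ} (hab : a ≤ b) (ha : ¬ P a) (hb : P b) :
    ∃ n, ¬ P n ∧ P (n + 1) := by
  by_contra hcon
  push_neg at hcon
  have key : ∀ k : ℕ, ¬ P (a + k) := by
    intro k
    induction k with
    | zero => simpa using ha
    | succ k ih =>
      have := hcon _ ih
      have he : a + (↑(k+1):ℤ) = (a + k) + 1 := by push_cast; ring
      rwa [he]
  exact key (b - a).toNat (by rwa [show a + ((b-a).toNat : ℤ) = b by omega])

private lemma core (w g h : FreeGroup B) (ξ η : Boundary B)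
    (hξ : TendstoBoundary B (fun k => g * w ^ k) ξ)
    (hη : TendstoBoundary B (fun k => g * w⁻¹ ^ k) η)
    (hsh : ξ ∈ shadow B h) (hns : η ∉ shadow B h) :
    ∃ g' : FreeGroup B,
      g'.toWord.length ≤ h.toWord.length + w.toWord.length ∧
      TendstoBoundary B (fun k => g' * w ^ k) ξ ∧
      TendstoBoundary B (fun k => g' * w⁻¹ ^ k) η := by
  obtain ⟨K₁, hK₁⟩ := hξ h.toWord.length
  obtain ⟨K₂, hK₂⟩ := hη h.toWord.length
  set k := max K₁ K₂ with hk
  have hb : h.toWord <+: (g * w ^ k).toWord := by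
    have := hK₁ k (le_max_left _ _)
    rwa [shadow_iff.1 hsh] at this
  have ha : ¬ h.toWord <+: (g * w⁻¹ ^ k).toWord := by
    intro hcon
    have h2 := hK₂ k (le_max_right _ _)
    have hlen : (List.ofFn fun i : Fin h.toWord.length => η.1 i).length
        = h.toWord.length := by simp
    have heq : (List.ofFn fun i : Fin h.toWord.length => η.1 i) = h.toWord :=
      (List.prefix_of_prefix_length_le h2 hcon (by simp [hlen])).eq_of_length hlen
    exact hns (shadow_iff.2 heq)
  have hPk : h.toWord <+: (g * w ^ ((k:ℤ))).toWord := by rwa [zpow_natCast]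
  have hPa : ¬ h.toWord <+: (g * w ^ (-(k:ℤ))).toWord := by
    rwa [zpow_neg, zpow_natCast, ← inv_pow]
  obtain ⟨n, hn, hn1⟩ := int_ivt (P := fun n => h.toWord <+: (g * w ^ n).toWord)
    (by omega : (-(k:ℤ)) ≤ (k:ℤ)) hPa hPk
  refine ⟨g * w ^ n, ?_, tb_shift hξ n, ?_⟩
  · have hd := dist_le (x := g * w ^ n) (y := g * w ^ (n + 1)) hn1 hn
    have hxy : (g * w ^ n)⁻¹ * (g * w ^ (n + 1)) = w := by
      rw [mul_inv_rev, mul_assoc, inv_mul_cancel_left, ← zpow_neg, ← zpow_add]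
      norm_num
    rw [hxy] at hd
    have tri : (g * w ^ n).toWord.length
        ≤ h.toWord.length + ((g * w ^ n)⁻¹ * h).toWord.length := by
      have h5 := FreeGroup.norm_mul_le h (h⁻¹ * (g * w ^ n))
      rw [mul_inv_cancel_left] at h5
      have hninv : FreeGroup.norm (h⁻¹ * (g * w ^ n))
          = FreeGroup.norm ((g * w ^ n)⁻¹ * h) := by
        rw [← FreeGroup.norm_inv_eq (x := h⁻¹ * (g * w ^ n)), mul_inv_rev, inv_inv]
      rw [hninv] at h5
      exact h5
    omega
  · have hsh2 := tb_shift hη (-n)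
    have he : g * w⁻¹ ^ (-n) = g * w ^ n := by
      rw [inv_zpow, zpow_neg, inv_inv]
    rwa [he] at hsh2

/-- The set of pairs of boundary points that are the limits of `g·wᵏ` and `g·w⁻ᵏ`
(in the order prescribed by the boolean). -/
private def Pset {r : ℕ} (w : Fin r → FreeGroup B) (t : FreeGroup B × Fin r × Bool) :
    Set (Boundary B × Boundary B) :=
  {p | TendstoBoundary B (fun k => t.1 * w t.2.1 ^ k) (if t.2.2 then p.1 else p.2) ∧
       TendstoBoundary B (fun k => t.1 * (w t.2.1)⁻¹ ^ k) (if t.2.2 then p.2 else p.1)}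

private lemma Pset_subsingleton {r : ℕ} (w : Fin r → FreeGroup B)
    (t : FreeGroup B × Fin r × Bool) : (Pset w t).Subsingleton := by
  obtain ⟨g, i, b⟩ := t
  rintro ⟨ξ, η⟩ ⟨hp1, hp2⟩ ⟨ξ', η'⟩ ⟨hq1, hq2⟩
  cases b
  · simp only [Pset, if_neg (Bool.false_ne_true)] at hp1 hp2 hq1 hq2
    exact Prod.ext (tb_unique hp2 hq2) (tb_unique hp1 hq1)
  · simp only [Pset, if_pos rfl] at hp1 hp2 hq1 hq2
    exact Prod.ext (tb_unique hp1 hq1) (tb_unique hp2 hq2)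

end AuxForStatement3

/-- if `A ⊆ ∂F` is a union of finitely many shadows, then only
finitely many lines of the line pattern have exactly one endpoint in `A`. -/
theorem finitely_many_lines_with_one_end_in_finite_union_of_shadows
    (B : Type) [Fintype B] [DecidableEq B] (hB : 2 ≤ Fintype.card B)
    (r : ℕ) (w : Fin r → FreeGroup B) (hw : ∀ i, w i ≠ 1) (hmal : Malnormal B w)
    (A : Set (Boundary B)) (G : Finset (FreeGroup B)) (hG : ∀ g ∈ G, g ≠ 1)
    (hA : A = ⋃ g ∈ G, shadow B g) :
    Set.Finite {p : Boundary B × Boundary B |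
      IsLine B w p.1 p.2 ∧ p.1 ∈ A ∧ p.2 ∉ A} := by
  classical
  have hTfin : ((FreeGroup.toWord ⁻¹'
      {l : List (B × Bool) | l.length ≤ (G.sup fun h => h.toWord.length) +
        ((Finset.univ : Finset (Fin r)).sup fun i => (w i).toWord.length)}) ×ˢ
      (Set.univ : Set (Fin r × Bool))).Finite :=
    ((List.finite_length_le (B × Bool) _).preimage
      FreeGroup.toWord_injective.injOn).prod Set.finite_univ
  refine Set.Finite.subset (Set.Finite.biUnion hTfin
    (fun t _ => (Pset_subsingleton w t).finite)) ?_
  rintro ⟨ξ, η⟩ ⟨⟨g, i, hor⟩, hpA, hqA⟩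
  rw [hA] at hpA hqA
  simp only [Set.mem_iUnion] at hpA
  obtain ⟨h, hhG, hsh⟩ := hpA
  have hns : η ∉ shadow B h := fun hc => hqA (Set.mem_biUnion hhG hc)
  have hhN : h.toWord.length ≤ G.sup fun h => h.toWord.length := Finset.le_sup (f := fun h : FreeGroup B => h.toWord.length) hhG
  have hwM : (w i).toWord.length
      ≤ (Finset.univ : Finset (Fin r)).sup fun i => (w i).toWord.length :=
    Finset.le_sup (f := fun i => (w i).toWord.length) (Finset.mem_univ i)
  rcases hor with ⟨h1, h2⟩ | ⟨h1, h2⟩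
  · obtain ⟨g', hg', t1, t2⟩ := core (w i) g h ξ η h1 h2 hsh hns
    refine Set.mem_biUnion (x := (g', i, true)) ⟨?_, Set.mem_univ _⟩ ?_
    · exact le_trans hg' (add_le_add hhN hwM)
    · exact ⟨t1, t2⟩
  · have h1' : TendstoBoundary B (fun k => g * ((w i)⁻¹)⁻¹ ^ k) η := by
      simpa only [inv_inv] using h1
    obtain ⟨g', hg', t1, t2⟩ := core ((w i)⁻¹) g h ξ η h2 h1' hsh hns
    have hg'' : g'.toWord.length ≤ h.toWord.length + (w i).toWord.length := by
      rwa [FreeGroup.toWord_inv, FreeGroup.invRev_length] at hg'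
    have t2' : TendstoBoundary B (fun k => g' * w i ^ k) η := by
      simpa only [inv_inv] using t2
    refine Set.mem_biUnion (x := (g', i, false)) ⟨?_, Set.mem_univ _⟩ ?_
    · exact le_trans hg'' (add_le_add hhN hwM)
    · exact ⟨t2', t1⟩
end

section
/- Let σ : D → ℤ be continuous. If σ is supported on a finite nonempty subtree X₁ of T containing the identity e and also supported on a finite nonempty subtree X₂ of T containing e, then σ is supported on the subtree X₁ ∩ X₂ (which is a nonempty subtree of T since both contain e). -/
open scoped BigOperators

open DecompPaper
section Aux

namespace DecompPaperAux

open FreeGroup DecompPaper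

set_option linter.unusedSectionVars false

variable {B : Type} [DecidableEq B]

/-- A word with no cancelling adjacent pair. -/
def NoCancel (L : List (B × Bool)) : Prop :=
  List.Chain' (fun a b => b ≠ (a.1, !a.2)) L

lemma reduce_eq_self {L : List (B × Bool)} (h : NoCancel L) : FreeGroup.reduce L = L := by
  induction L with
  | nil => rfl
  | cons x L ih =>
    rw [FreeGroup.reduce.cons, ih h.tail]
    cases L with
    | nil => rfl
    | cons y t =>
      have hxy : y ≠ (x.1, !x.2) := (List.isChain_cons_cons.mp h).1
      have : ¬(x.1 = y.1 ∧ x.2 = !y.2) := by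
        rintro ⟨h1, h2⟩
        exact hxy (by
          have : y.2 = !x.2 := by rw [h2, Bool.not_not]
          exact Prod.ext h1.symm this)
      simp [this]

lemma noCancel_reduce (L : List (B × Bool)) : NoCancel (FreeGroup.reduce L) := by
  induction L with
  | nil => exact List.isChain_nil
  | cons x L ih =>
    rw [FreeGroup.reduce.cons]
    rcases h : FreeGroup.reduce L with _ | ⟨y, t⟩
    · exact List.isChain_singleton _
    · rw [h] at ih
      by_cases hc : x.1 = y.1 ∧ x.2 = !y.2
      · simp only [hc, and_self, if_true]
        exact ih.tail
      · simp only [hc, if_false]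
        refine List.isChain_cons_cons.mpr ⟨?_, ih⟩
        intro hy
        exact hc ⟨by rw [hy], by rw [hy, Bool.not_not]⟩

lemma noCancel_toWord (g : FreeGroup B) : NoCancel g.toWord := by
  rw [← FreeGroup.reduce_toWord]; exact noCancel_reduce _

lemma toWord_mk' {L : List (B × Bool)} (h : NoCancel L) : (FreeGroup.mk L).toWord = L := by
  rw [FreeGroup.toWord_mk, reduce_eq_self h]

lemma mk_pair_cancel (c : B × Bool) : FreeGroup.mk [c, (c.1, !c.2)] = (1 : FreeGroup B) := by
  rw [FreeGroup.one_eq_mk]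
  apply FreeGroup.reduce.exact
  simp [FreeGroup.reduce.cons, FreeGroup.reduce_singleton]

lemma mk_concat_cancel (A : List (B × Bool)) (c : B × Bool) :
    FreeGroup.mk (A ++ [c, (c.1, !c.2)]) = FreeGroup.mk A := by
  rw [← FreeGroup.mul_mk, mk_pair_cancel, mul_one]

/-- Adjacent vertices of the tree: one reduced word is the other plus a final letter. -/
lemma adj_toWord {g h : FreeGroup B} (hadj : Adj B g h) :
    (∃ x, h.toWord = g.toWord ++ [x]) ∨ (∃ x, g.toWord = h.toWord ++ [x]) := by
  obtain ⟨x, rfl⟩ := hadj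
  rcases (g.toWord).eq_nil_or_concat with hnil | ⟨A, a, hA⟩
  · left
    refine ⟨x, ?_⟩
    have : g = 1 := FreeGroup.toWord_eq_nil_iff.mp hnil
    rw [this, one_mul, FreeGroup.toWord_one, List.nil_append, toWord_mk' (List.isChain_singleton _)]
  · rw [List.concat_eq_append] at hA
    by_cases hax : a = (x.1, !x.2)
    · right
      refine ⟨(x.1, !x.2), ?_⟩
      have hgw : g * FreeGroup.mk [x] = FreeGroup.mk A := by
        conv_lhs => rw [← FreeGroup.mk_toWord (x := g), hA]
        rw [FreeGroup.mul_mk, List.append_assoc, hax]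
        have hx' : ((x.1, !x.2) : B × Bool).1 = x.1 := rfl
        have : ([(x.1, !x.2)] ++ [x] : List (B × Bool)) =
            [((x.1, !x.2) : B × Bool), (((x.1, !x.2) : B × Bool).1, !((x.1, !x.2) : B × Bool).2)] := by
          simp
        rw [this, mk_concat_cancel]
      have hAred : NoCancel A := by
        have := noCancel_toWord g
        rw [hA] at this
        exact this.prefix (List.prefix_append _ _)
      rw [hgw, toWord_mk' hAred, hA, hax]
    · left
      refine ⟨x, ?_⟩
      have hred : NoCancel (g.toWord ++ [x]) := by
        rw [hA, NoCancel, List.append_assoc]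
        refine List.IsChain.append ?_ ?_ ?_
        · have := noCancel_toWord g
          rw [hA] at this
          exact this.prefix (List.prefix_append _ _)
        · exact List.isChain_pair.mpr (by
            intro hx
            exact hax (by
              have h1 : a.1 = x.1 := by rw [hx]
              have h2 : x.2 = !a.2 := by rw [hx]
              exact Prod.ext (by rw [← h1]) (by rw [h2, Bool.not_not])))
        · intro p hp q hq
          simp only [List.cons_append, List.head?_cons, Option.mem_def, Option.some.injEq] at hq
          subst hq
          have hg := noCancel_toWord g
          rw [hA, NoCancel] at hg
          exact (List.isChain_append.mp hg).2.2 p hp a (by simp)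
      conv_lhs => rw [← FreeGroup.mk_toWord (x := g)]
      rw [FreeGroup.mul_mk, toWord_mk' hred]

lemma prefix_concat_cases {α : Type*} {p l : List α} {x : α} (h : p <+: l ++ [x]) :
    p = l ++ [x] ∨ p <+: l := by
  obtain ⟨t, ht⟩ := h
  rcases t.eq_nil_or_concat with rfl | ⟨t', y, rfl⟩
  · left; simpa using ht
  · right
    refine ⟨t', ?_⟩
    have h2 : (p ++ t') ++ [y] = l ++ [x] := by
      rw [List.concat_eq_append, ← List.append_assoc] at ht; exact ht
    have := congrArg List.dropLast h2
    simpa using this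

lemma prefix_transfer {g h : FreeGroup B} (hadj : Adj B g h) {p : List (B × Bool)}
    (hg : g.toWord ≠ p) (hh : h.toWord ≠ p) :
    (p <+: g.toWord ↔ p <+: h.toWord) := by
  rcases adj_toWord hadj with ⟨x, hx⟩ | ⟨x, hx⟩
  · rw [hx]
    constructor
    · intro hp; exact hp.trans (List.prefix_append _ _)
    · intro hp
      rcases prefix_concat_cases hp with h1 | h1
      · exact absurd (hx.trans h1.symm) hh
      · exact h1
  · rw [hx]
    constructor
    · intro hp
      rcases prefix_concat_cases hp with h1 | h1
      · exact absurd (hx.trans h1.symm) hg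
      · exact h1
    · intro hp; exact hp.trans (List.prefix_append _ _)

/-- Cone lemma: a subtree containing the identity is closed under taking prefixes. -/
lemma cone {X : Set (FreeGroup B)} (htree : IsSubtree B X) (he : (1 : FreeGroup B) ∈ X)
    {u : FreeGroup B} (hu : u ∈ X) {p : List (B × Bool)} (hp : p <+: u.toWord) :
    FreeGroup.mk p ∈ X := by
  by_contra hnp
  rcases eq_or_ne p [] with rfl | hpne
  · exact hnp (by rw [← FreeGroup.one_eq_mk]; exact he)
  have key : ∀ v, Relation.ReflTransGen (fun a b => Adj B a b ∧ b ∈ X) 1 v →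
      v ∈ X ∧ ¬ p <+: v.toWord := by
    intro v hv
    induction hv with
    | refl =>
      refine ⟨he, ?_⟩
      rw [FreeGroup.toWord_one]
      intro hple
      exact hpne (List.prefix_nil.mp hple)
    | @tail b c hb hbc ih =>
      obtain ⟨hadjbc, hcX⟩ := hbc
      refine ⟨hcX, ?_⟩
      have hbp : b.toWord ≠ p := by
        intro hbp
        exact hnp (by rw [← hbp, FreeGroup.mk_toWord]; exact ih.1)
      have hcp : c.toWord ≠ p := by
        intro hcp
        exact hnp (by rw [← hcp, FreeGroup.mk_toWord]; exact hcX)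
      intro hpc
      exact ih.2 ((prefix_transfer hadjbc hbp hcp).mpr hpc)
  exact (key u (htree 1 he u hu)).2 hp

/-- If `u`'s word is a prefix of `v`'s word and `u ∉ X` then `v ∉ X`. -/
lemma not_mem_of_prefix {X : Set (FreeGroup B)} (htree : IsSubtree B X)
    (he : (1 : FreeGroup B) ∈ X) {u v : FreeGroup B} (hpre : u.toWord <+: v.toWord)
    (hu : u ∉ X) : v ∉ X := by
  intro hv
  exact hu (by
    have := cone htree he hv hpre
    rwa [FreeGroup.mk_toWord] at this)

lemma ofFn_succ_concat {α : Type*} (f : ℕ → α) (k : ℕ) :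
    (List.ofFn fun i : Fin (k + 1) => f i) = (List.ofFn fun i : Fin k => f i) ++ [f k] := by
  rw [List.ofFn_succ']
  simp [List.concat_eq_append]

lemma ofFn_prefix_ofFn {α : Type*} (f : ℕ → α) {m k : ℕ} (h : m ≤ k) :
    (List.ofFn fun i : Fin m => f i) <+: (List.ofFn fun i : Fin k => f i) := by
  induction k, h using Nat.le_induction with
  | base => exact List.prefix_rfl
  | succ k hk ih =>
    rw [ofFn_succ_concat]
    exact ih.trans (List.prefix_append _ _)

lemma noCancel_ofFn (ξ : Boundary B) (m : ℕ) :
    NoCancel (List.ofFn fun i : Fin m => ξ.1 i) := by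
  rw [NoCancel, List.Chain', List.isChain_iff_getElem]
  intro i hi
  simp only [List.get_eq_getElem, List.getElem_ofFn]
  exact ξ.2 i

lemma prefixOf_toWord (ξ : Boundary B) (m : ℕ) :
    (prefixOf B ξ m).toWord = List.ofFn fun i : Fin m => ξ.1 i :=
  toWord_mk' (noCancel_ofFn ξ m)

lemma prefixOf_prefix (ξ : Boundary B) {m k : ℕ} (h : m ≤ k) :
    (prefixOf B ξ m).toWord <+: (prefixOf B ξ k).toWord := by
  rw [prefixOf_toWord, prefixOf_toWord]
  exact ofFn_prefix_ofFn _ h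

lemma adj_prefixOf (ξ : Boundary B) (k : ℕ) :
    Adj B (prefixOf B ξ k) (prefixOf B ξ (k + 1)) := by
  refine ⟨ξ.1 k, ?_⟩
  rw [prefixOf, prefixOf, FreeGroup.mul_mk]
  congr 1
  exact ofFn_succ_concat (fun i => ξ.1 i) k

/-- The eventually-constant extension of a finite word to an infinite sequence. -/
def zetaFun (d : B × Bool) (L : List (B × Bool)) : ℕ → B × Bool :=
  fun k => L.getD (min k (L.length - 1)) d

lemma zetaFun_eq_getElem (d : B × Bool) (L : List (B × Bool)) (k : ℕ) (hL : L ≠ []) :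
    ∃ hk : min k (L.length - 1) < L.length, zetaFun d L k = L[min k (L.length - 1)] := by
  have hlen : 0 < L.length := List.length_pos_iff.mpr hL
  have hk : min k (L.length - 1) < L.length :=
    lt_of_le_of_lt (min_le_right _ _) (by omega)
  refine ⟨hk, ?_⟩
  rw [zetaFun, List.getD_eq_getElem?_getD, List.getElem?_eq_getElem hk, Option.getD_some]

/-- The boundary point obtained by extending `v` by repeating its last letter. -/
def zeta (d : B × Bool) (v : FreeGroup B) : Boundary B := by
  refine ⟨zetaFun d v.toWord, ?_⟩
  intro k
  rcases eq_or_ne v.toWord [] with hnil | hne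
  · rw [zetaFun, zetaFun, hnil]
    simp only [List.getD_nil]
    intro h
    have : d.2 = !d.2 := congr(($h).2)
    simp at this
  · obtain ⟨h1, e1⟩ := zetaFun_eq_getElem d v.toWord (k + 1) hne
    obtain ⟨h2, e2⟩ := zetaFun_eq_getElem d v.toWord k hne
    rw [e1, e2]
    rcases lt_or_ge k (v.toWord.length - 1) with hlt | hge
    · have hmin1 : min (k + 1) (v.toWord.length - 1) = k + 1 := min_eq_left (by omega)
      have hmin2 : min k (v.toWord.length - 1) = k := min_eq_left (by omega)
      have hchain := noCancel_toWord v
      rw [NoCancel, List.Chain', List.isChain_iff_getElem] at hchain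
      have := hchain k (by omega)
      simp only [hmin1, hmin2]
      exact fun h => this (by convert h using 2)
    · have hmin1 : min (k + 1) (v.toWord.length - 1) = v.toWord.length - 1 := min_eq_right (by omega)
      have hmin2 : min k (v.toWord.length - 1) = v.toWord.length - 1 := min_eq_right hge
      simp only [hmin1, hmin2]
      intro h
      have : (v.toWord[v.toWord.length - 1]'(by omega) : B × Bool).2 = !(v.toWord[v.toWord.length - 1]'(by omega) : B × Bool).2 :=
        congr(($h).2)
      simp at this

lemma ofFn_zetaFun_length (d : B × Bool) (L : List (B × Bool)) :
    (List.ofFn fun i : Fin L.length => zetaFun d L i) = L := by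
  rcases eq_or_ne L [] with rfl | hne
  · simp
  · apply List.ext_getElem (by simp)
    intro i h1 h2
    simp only [List.getElem_ofFn]
    obtain ⟨hk, e⟩ := zetaFun_eq_getElem d L i hne
    rw [e]
    congr 1
    simp only [List.length_ofFn] at h1
    omega

lemma prefixOf_zeta_self (d : B × Bool) (v : FreeGroup B) :
    prefixOf B (zeta d v) v.toWord.length = v := by
  rw [prefixOf]
  conv_rhs => rw [← FreeGroup.mk_toWord (x := v)]
  congr 1
  exact ofFn_zetaFun_length d v.toWord

/-- Membership of a boundary point in the boundary of the component of `a`,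
given that some prefix equals `a ∉ X`. -/
lemma mem_bd {X : Set (FreeGroup B)} (htree : IsSubtree B X) (he : (1 : FreeGroup B) ∈ X)
    {a : FreeGroup B} (ha : a ∉ X) (ξ : Boundary B) (m : ℕ) (hm : prefixOf B ξ m = a) :
    ξ ∈ boundaryOf B {u | Relation.ReflTransGen
      (fun p q => Adj B p q ∧ p ∉ X ∧ q ∉ X) a u} := by
  have hnot : ∀ k, m ≤ k → prefixOf B ξ k ∉ X := by
    intro k hk
    refine not_mem_of_prefix htree he ?_ (hm ▸ ha)
    exact prefixOf_prefix ξ hk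
  refine ⟨m, ?_⟩
  intro k hk
  induction k, hk using Nat.le_induction with
  | base => exact hm ▸ Relation.ReflTransGen.refl
  | succ k hk ih =>
    exact ih.tail ⟨adj_prefixOf ξ k, hnot k hk, hnot (k + 1) (by omega)⟩

variable {r : ℕ} {w : Fin r → FreeGroup B} {σ : DSpace B w → ℤ}

lemma endpoint {X : Set (FreeGroup B)} (htree : IsSubtree B X) (he : (1 : FreeGroup B) ∈ X)
    (hsup : SupportedOn B w σ X) (d : B × Bool) (ξ : Boundary B) (m : ℕ)
    (ha : prefixOf B ξ m ∉ X) :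
    σ (qmap B w ξ) = σ (qmap B w (zeta d (prefixOf B ξ m))) := by
  exact hsup _ ⟨prefixOf B ξ m, ha, rfl⟩ ξ (mem_bd htree he ha ξ m rfl)
    (zeta d (prefixOf B ξ m)) (mem_bd htree he ha _ _ (prefixOf_zeta_self d _))

lemma step1 {X : Set (FreeGroup B)} (htree : IsSubtree B X) (he : (1 : FreeGroup B) ∈ X)
    (hsup : SupportedOn B w σ X) (d : B × Bool) {u u' : FreeGroup B}
    (hu : u ∉ X) (hu' : u' ∉ X) (hadj : Adj B u u') :
    σ (qmap B w (zeta d u)) = σ (qmap B w (zeta d u')) := by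
  refine hsup _ ⟨u, hu, rfl⟩ _ (mem_bd htree he hu _ _ (prefixOf_zeta_self d u)) _ ?_
  obtain ⟨m, hmem⟩ := mem_bd htree he hu' (zeta d u') _ (prefixOf_zeta_self d u')
  exact ⟨m, fun k hk => Relation.ReflTransGen.head ⟨hadj, hu, hu'⟩ (hmem k hk)⟩

end DecompPaperAux

end Aux

open DecompPaperAux in
/-- Lemma `intersections`: if a continuous `σ : D → ℤ` is supported
on finite nonempty subtrees `X₁` and `X₂` of `T`, both containing `e`, then it is
supported on `X₁ ∩ X₂`. -/
theorem supported_on_intersection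
    (B : Type) [Fintype B] [DecidableEq B] (hB : 2 ≤ Fintype.card B)
    (r : ℕ) (w : Fin r → FreeGroup B) (hw : ∀ i, w i ≠ 1) (hmal : Malnormal B w)
    (σ : DSpace B w → ℤ) (hσ : Continuous σ)
    (X₁ X₂ : Set (FreeGroup B))
    (h₁fin : X₁.Finite) (h₁ne : X₁.Nonempty) (h₁tree : IsSubtree B X₁)
    (h₁e : (1 : FreeGroup B) ∈ X₁)
    (h₂fin : X₂.Finite) (h₂ne : X₂.Nonempty) (h₂tree : IsSubtree B X₂)
    (h₂e : (1 : FreeGroup B) ∈ X₂)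
    (h₁ : SupportedOn B w σ X₁) (h₂ : SupportedOn B w σ X₂) :
    SupportedOn B w σ (X₁ ∩ X₂) := by
  classical
  have hne : Nonempty B := Fintype.card_pos_iff.mp (by omega)
  obtain ⟨b0⟩ := hne
  set d : B × Bool := (b0, true) with hd
  intro C hC ξ hξ η hη
  obtain ⟨v₀, hv₀, rfl⟩ := hC
  obtain ⟨m₁, hm₁⟩ := hξ
  obtain ⟨m₂, hm₂⟩ := hη
  have step12 : ∀ {u u' : FreeGroup B}, u ∉ X₁ ∩ X₂ → u' ∉ X₁ ∩ X₂ → Adj B u u' →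
      σ (qmap B w (zeta d u)) = σ (qmap B w (zeta d u')) := by
    intro u u' hu hu' hadj
    rcases adj_toWord hadj with ⟨x, hx⟩ | ⟨x, hx⟩
    · have hpre : u.toWord <+: u'.toWord := hx ▸ List.prefix_append _ _
      rcases not_and_or.mp (by simpa [Set.mem_inter_iff] using hu) with h | h
      · exact step1 h₁tree h₁e h₁ d h (not_mem_of_prefix h₁tree h₁e hpre h) hadj
      · exact step1 h₂tree h₂e h₂ d h (not_mem_of_prefix h₂tree h₂e hpre h) hadj
    · have hpre : u'.toWord <+: u.toWord := hx ▸ List.prefix_append _ _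
      rcases not_and_or.mp (by simpa [Set.mem_inter_iff] using hu') with h | h
      · exact step1 h₁tree h₁e h₁ d (not_mem_of_prefix h₁tree h₁e hpre h) h hadj
      · exact step1 h₂tree h₂e h₂ d (not_mem_of_prefix h₂tree h₂e hpre h) h hadj
  have hCnot : ∀ u, Relation.ReflTransGen
      (fun p q => Adj B p q ∧ p ∉ X₁ ∩ X₂ ∧ q ∉ X₁ ∩ X₂) v₀ u → u ∉ X₁ ∩ X₂ := by
    intro u hu
    induction hu with
    | refl => exact hv₀
    | tail _ h ih => exact h.2.2
  have key : ∀ u, Relation.ReflTransGen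
      (fun p q => Adj B p q ∧ p ∉ X₁ ∩ X₂ ∧ q ∉ X₁ ∩ X₂) v₀ u →
      σ (qmap B w (zeta d u)) = σ (qmap B w (zeta d v₀)) := by
    intro u hu
    induction hu with
    | refl => rfl
    | @tail b c hb hbc ih => rw [← ih]; exact (step12 hbc.2.1 hbc.2.2 hbc.1).symm
  have hmem1 := hm₁ m₁ le_rfl
  have hmem2 := hm₂ m₂ le_rfl
  have ha : prefixOf B ξ m₁ ∉ X₁ ∩ X₂ := hCnot _ hmem1
  have hb : prefixOf B η m₂ ∉ X₁ ∩ X₂ := hCnot _ hmem2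
  have eξ : σ (qmap B w ξ) = σ (qmap B w (zeta d (prefixOf B ξ m₁))) := by
    rcases not_and_or.mp (by simpa [Set.mem_inter_iff] using ha) with h | h
    · exact endpoint h₁tree h₁e h₁ d ξ m₁ h
    · exact endpoint h₂tree h₂e h₂ d ξ m₁ h
  have eη : σ (qmap B w η) = σ (qmap B w (zeta d (prefixOf B η m₂))) := by
    rcases not_and_or.mp (by simpa [Set.mem_inter_iff] using hb) with h | h
    · exact endpoint h₁tree h₁e h₁ d η m₂ h
    · exact endpoint h₂tree h₂e h₂ d η m₂ h
  rw [eξ, eη, key _ hmem1, key _ hmem2]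
end

section
/- The submodule B¹ of C¹ is generated as a right ℤ[F]-module by the set of elements dσ where σ : ∂F → ℤ is continuous and constant on ∂C for every connected component C of T ∖ {e} (the subtree consisting of the single identity vertex e). -/
open scoped BigOperators

namespace DecompPaper

variable (B : Type) [DecidableEq B]

section Aux
set_option linter.unusedSectionVars false
variable {B : Type} [DecidableEq B]

/-- Flip a letter. -/
def flipL (x : B × Bool) : B × Bool := (x.1, !x.2)

lemma flipL_flipL (x : B × Bool) : flipL (flipL x) = x := by
  simp [flipL]

lemma flipL_ne (x : B × Bool) : flipL x ≠ x := by
  simp [flipL, Prod.ext_iff]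

/-- A reduced list of letters. -/
def RedList (l : List (B × Bool)) : Prop := l.Chain' (fun a b => b ≠ flipL a)

lemma RedList.no_step {l m : List (B × Bool)} (h : RedList l)
    (s : FreeGroup.Red.Step l m) : False := by
  cases s with
  | @not L1 L2 x b =>
    have h' := (List.isChain_append_cons_cons.1 h).2.1
    exact h' rfl

lemma RedList.red_eq {l m : List (B × Bool)} (h : RedList l)
    (s : FreeGroup.Red l m) : m = l := by
  rcases Relation.ReflTransGen.cases_head s with e | ⟨c, hc, _⟩
  · exact e.symm
  · exact absurd hc (fun hs => h.no_step hs)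

lemma RedList.toWord_mk {l : List (B × Bool)} (h : RedList l) :
    (FreeGroup.mk l).toWord = l := by
  rw [FreeGroup.toWord_mk]
  exact h.red_eq FreeGroup.reduce.red

lemma redList_toWord (g : FreeGroup B) : RedList g.toWord := by
  rw [RedList, List.Chain', List.isChain_iff_getElem]
  intro i hi hcon
  set l := g.toWord with hl
  have hi2 : i + 1 < l.length := by omega
  have h1 : l = l.take i ++ (l.get ⟨i, by omega⟩) ::
      (l.get ⟨i+1, hi2⟩) :: l.drop (i + 2) := by
    conv_lhs => rw [← List.take_append_drop i l]
    congr 1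
    rw [List.drop_eq_getElem_cons (by omega), List.drop_eq_getElem_cons (by omega)]
    simp [List.get_eq_getElem]
  have h2 : FreeGroup.reduce l = l.take i ++ ((l.get ⟨i, by omega⟩).1, (l.get ⟨i, by omega⟩).2)
      :: ((l.get ⟨i, by omega⟩).1, !(l.get ⟨i, by omega⟩).2) :: l.drop (i+2) := by
    have hr : FreeGroup.reduce l = l := FreeGroup.reduce_toWord g
    rw [hr]
    nth_rewrite 1 [h1]
    congr 2
    show g.toWord[i+1] :: _ = _
    rw [hcon]
    rfl
  exact FreeGroup.reduce.not h2

end Aux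
section Aux2
set_option linter.unusedSectionVars false
variable {B : Type} [DecidableEq B]

lemma consB_cancel {x : B × Bool} {ξ : Boundary B} (h : ξ.1 0 = flipL x) :
    (consB B x ξ).1 = fun k => ξ.1 (k + 1) := by
  have h' : ξ.1 0 = (x.1, !x.2) := h
  unfold consB
  rw [dif_pos h']

lemma consB_head {x : B × Bool} {ξ : Boundary B} (h : ξ.1 0 ≠ flipL x) :
    (consB B x ξ).1 0 = x := by
  have h' : ξ.1 0 ≠ (x.1, !x.2) := h
  unfold consB
  rw [dif_neg h']
  rfl

lemma consB_tail {x : B × Bool} {ξ : Boundary B} (h : ξ.1 0 ≠ flipL x) (k : ℕ) :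
    (consB B x ξ).1 (k + 1) = ξ.1 k := by
  have h' : ξ.1 0 ≠ (x.1, !x.2) := h
  unfold consB
  rw [dif_neg h']

/-- Folding the flipped letters of `l` from the left. -/
def fld (ζ : Boundary B) (l : List (B × Bool)) : Boundary B :=
  (l.map flipL).foldl (fun ξ a => consB B a ξ) ζ

lemma fld_nil (ζ : Boundary B) : fld ζ [] = ζ := rfl

lemma fld_cons (ζ : Boundary B) (a : B × Bool) (l : List (B × Bool)) :
    fld ζ (a :: l) = fld (consB B (flipL a) ζ) l := rfl

lemma fld_nocancel : ∀ (l : List (B × Bool)) (hne : l ≠ []), RedList l →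
    ∀ ζ : Boundary B, ζ.1 0 ≠ l.head hne →
    (fld ζ l).1 0 = flipL (l.getLast hne)
  | [], hne, _, _, _ => absurd rfl hne
  | [a], _, _, ζ, hhead => by
      have hc : ζ.1 0 ≠ flipL (flipL a) := by rwa [flipL_flipL]
      rw [fld_cons, fld_nil, List.getLast_singleton]
      exact consB_head hc
  | a :: b :: t, _, hl, ζ, hhead => by
      have hab : b ≠ flipL a := (List.isChain_cons_cons.1 hl).1
      have hc : ζ.1 0 ≠ flipL (flipL a) := by rwa [flipL_flipL]
      rw [fld_cons]
      have h2 : (consB B (flipL a) ζ).1 0 ≠ (b :: t).head (by simp) := by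
        rw [consB_head hc]
        exact fun h => hab h.symm
      rw [List.getLast_cons (by simp)]
      exact fld_nocancel (b :: t) (by simp) (List.isChain_cons_cons.1 hl).2 _ h2

lemma fld_key : ∀ (l : List (B × Bool)) (x : B × Bool), RedList (l ++ [x]) →
    ∀ ζ : Boundary B,
    ((fld ζ l).1 0 = x ↔
      ∀ i (h : i < l.length + 1), ζ.1 i = (l ++ [x]).get ⟨i, by simpa using h⟩)
  | [], x, _, ζ => by
      constructor
      · intro h i hi
        have : i = 0 := Nat.lt_one_iff.1 (by simpa using hi)
        subst this
        simpa [fld_nil] using h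
      · intro h
        simpa [fld_nil] using h 0 (Nat.succ_pos _)
  | a :: l, x, hl, ζ => by
      have hl2 : RedList (l ++ [x]) := (List.isChain_cons.1 hl).2
      by_cases hc : ζ.1 0 = a
      · have hc' : ζ.1 0 = flipL (flipL a) := by rwa [flipL_flipL]
        rw [fld_cons]
        have htail := consB_cancel hc'
        rw [fld_key l x hl2 (consB B (flipL a) ζ)]
        constructor
        · intro h i hi
          cases i with
          | zero => simpa using hc
          | succ j =>
              have := h j (by simpa using hi)
              rw [htail] at this
              simpa using this
        · intro h i hi
          have := h (i + 1) (by simpa using hi)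
          rw [htail]
          simpa using this
      · have hc' : ζ.1 0 ≠ flipL (flipL a) := by rwa [flipL_flipL]
        have hLHS : (fld ζ (a :: l)).1 0 ≠ x := by
          rw [fld_cons]
          cases l with
          | nil =>
              rw [fld_nil, consB_head hc']
              have hx : x ≠ flipL a := (List.isChain_cons.1 hl).1 x (by simp)
              exact fun e => hx e.symm
          | cons b t =>
              have hne : (b :: t : List (B × Bool)) ≠ [] := by simp
              have hb : b ≠ flipL a := (List.isChain_cons.1 hl).1 b (by simp)
              have hh : (consB B (flipL a) ζ).1 0 ≠ (b :: t).head hne := by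
                rw [consB_head hc']
                exact fun e => hb e.symm
              have hred : RedList (b :: t) := (List.isChain_append.1 hl2).1
              rw [fld_nocancel (b :: t) hne hred _ hh]
              have hx : x ≠ flipL ((b :: t).getLast hne) := by
                have h3 := (List.isChain_append.1 hl2).2.2
                exact h3 ((b :: t).getLast hne) (List.getLast?_eq_getLast hne) x rfl
              exact fun e => hx e.symm
        constructor
        · intro h
          exact absurd h hLHS
        · intro h
          have := h 0 (Nat.succ_pos _)
          simp at this
          exact absurd this hc
end Aux2
section Aux3
set_option linter.unusedSectionVars false
variable {B : Type} [DecidableEq B]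

lemma actB_mk_inv (l : List (B × Bool)) (hl : RedList l) (ζ : Boundary B) :
    actB B (FreeGroup.mk l)⁻¹ ζ = fld ζ l := by
  show ((FreeGroup.mk l)⁻¹.toWord).foldr (consB B) ζ = fld ζ l
  rw [FreeGroup.toWord_inv, hl.toWord_mk, FreeGroup.invRev, List.foldr_reverse]
  rfl

lemma redList_ofFn (ξ : Boundary B) (n : ℕ) :
    RedList (List.ofFn fun i : Fin n => ξ.1 i) := by
  rw [RedList, List.Chain', List.isChain_iff_getElem]
  intro i hi
  simp only [List.length_ofFn] at hi
  rw [List.getElem_ofFn, List.getElem_ofFn]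
  exact ξ.2 i

lemma toWord_prefixOf (ξ : Boundary B) (n : ℕ) :
    (prefixOf B ξ n).toWord = List.ofFn fun i : Fin n => ξ.1 i :=
  (redList_ofFn ξ n).toWord_mk

/-- Next letter avoiding cancellation. -/
noncomputable def nxt [Nontrivial B] (y : B × Bool) : B × Bool :=
  ((exists_ne y.1).choose, true)

lemma nxt_ne [Nontrivial B] (y : B × Bool) : nxt y ≠ flipL y := by
  intro e
  exact (exists_ne y.1).choose_spec (congrArg Prod.fst e)

/-- Extension of a finite word to an infinite one. -/
noncomputable def extSeq [Nontrivial B] {N : ℕ} (s : Fin (N + 1) → B × Bool) : ℕ → B × Bool :=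
  fun k => Nat.rec (s 0) (fun j prev => if h : j + 1 < N + 1 then s ⟨j + 1, h⟩ else nxt prev) k

lemma extSeq_eq [Nontrivial B] {N : ℕ} (s : Fin (N + 1) → B × Bool) :
    ∀ (k : ℕ) (h : k < N + 1), extSeq s k = s ⟨k, h⟩
  | 0, _ => rfl
  | k + 1, h => by
      show (if h' : k + 1 < N + 1 then s ⟨k + 1, h'⟩ else nxt (extSeq s k)) = s ⟨k + 1, h⟩
      rw [dif_pos h]

lemma extSeq_red [Nontrivial B] {N : ℕ} (s : Fin (N + 1) → B × Bool)
    (hs : ∀ (i : ℕ) (h : i + 1 < N + 1), s ⟨i + 1, h⟩ ≠ flipL (s ⟨i, by omega⟩)) (k : ℕ) :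
    extSeq s (k + 1) ≠ flipL (extSeq s k) := by
  show (if h' : k + 1 < N + 1 then s ⟨k + 1, h'⟩ else nxt (extSeq s k)) ≠ flipL (extSeq s k)
  by_cases h : k + 1 < N + 1
  · rw [dif_pos h, extSeq_eq s k (by omega)]
    exact hs k h
  · rw [dif_neg h]
    exact nxt_ne _

/-- The extension as a boundary point. -/
noncomputable def extPt [Nontrivial B] {N : ℕ} (s : Fin (N + 1) → B × Bool)
    (hs : ∀ (i : ℕ) (h : i + 1 < N + 1), s ⟨i + 1, h⟩ ≠ flipL (s ⟨i, by omega⟩)) : Boundary B :=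
  ⟨extSeq s, fun k => extSeq_red s hs k⟩

lemma extPt_eq [Nontrivial B] {N : ℕ} (s : Fin (N + 1) → B × Bool)
    (hs : ∀ (i : ℕ) (h : i + 1 < N + 1), s ⟨i + 1, h⟩ ≠ flipL (s ⟨i, by omega⟩))
    (k : ℕ) (h : k < N + 1) : (extPt s hs).1 k = s ⟨k, h⟩ :=
  extSeq_eq s k h

lemma head?_eq_of_adj {a b : FreeGroup B} (hadj : Adj B a b) (ha : a ≠ 1) (hb : b ≠ 1) :
    a.toWord.head? = b.toWord.head? := by
  obtain ⟨x, rfl⟩ := hadj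
  set w := a.toWord with hw
  have hred : RedList w := redList_toWord a
  have ha' : a = FreeGroup.mk w := FreeGroup.mk_toWord.symm
  have hmul : a * FreeGroup.mk [x] = FreeGroup.mk (w ++ [x]) := by
    rw [ha', ← FreeGroup.mul_mk]
  have hwne : w ≠ [] := by
    intro h
    exact ha (by rw [ha', h, ← FreeGroup.one_eq_mk])
  set y := w.getLast hwne with hy
  have hsplit : w = w.dropLast ++ [y] := (List.dropLast_append_getLast hwne).symm
  by_cases hx : x = flipL y
  · have hstep : FreeGroup.Red.Step (w.dropLast ++ (y.1, y.2) :: (y.1, !y.2) :: ([] : List (B × Bool)))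
        (w.dropLast ++ []) := FreeGroup.Red.Step.not
    have hlist : w ++ [x] = w.dropLast ++ (y.1, y.2) :: (y.1, !y.2) :: [] := by
      conv_lhs => rw [hsplit]
      rw [List.append_assoc]
      congr 1
      rw [hx]
      rfl
    have hmk : FreeGroup.mk (w ++ [x]) = FreeGroup.mk w.dropLast := by
      rw [hlist]
      have := FreeGroup.reduce.Step.eq hstep
      rw [List.append_nil] at this
      exact FreeGroup.reduce.exact this
    have hdne : w.dropLast ≠ [] := by
      intro h
      apply hb
      rw [hmul, hmk, h, ← FreeGroup.one_eq_mk]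
    have hredd : RedList w.dropLast := by
      have : RedList (w.dropLast ++ [y]) := hsplit ▸ hred
      exact (List.isChain_append.1 this).1
    rw [hmul, hmk, hredd.toWord_mk]
    conv_lhs => rw [hsplit]
    rw [List.head?_append_of_ne_nil _ hdne]
  · have hredx : RedList (w ++ [x]) := by
      rw [RedList, List.Chain', List.isChain_append]
      refine ⟨hred, List.isChain_singleton x, ?_⟩
      intro p hp q hq
      rw [List.getLast?_eq_getLast hwne] at hp
      simp only [List.head?_cons, Option.mem_def, Option.some.injEq] at hp hq
      subst hq
      rw [← hp, ← hy]
      exact hx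
    rw [hmul, hredx.toWord_mk, List.head?_append_of_ne_nil _ hwne]
end Aux3
section Aux4
set_option linter.unusedSectionVars false
variable {B : Type} [DecidableEq B]

lemma comp_head {C : Set (FreeGroup B)} (hC : IsComponentOf B {1} C) :
    ∃ v : FreeGroup B, ∀ u ∈ C, u ≠ 1 ∧ u.toWord.head? = v.toWord.head? := by
  obtain ⟨v, hv1, rfl⟩ := hC
  refine ⟨v, fun u hu => ?_⟩
  induction hu with
  | refl => exact ⟨fun h => hv1 (h ▸ rfl), rfl⟩
  | tail hbc hrel ih =>
      obtain ⟨hadj, hb1, hc1⟩ := hrel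
      have hb1' : _ ≠ (1 : FreeGroup B) := fun h => hb1 (h ▸ rfl)
      have hc1' : _ ≠ (1 : FreeGroup B) := fun h => hc1 (h ▸ rfl)
      exact ⟨hc1', (head?_eq_of_adj hadj hb1' hc1').symm.trans ih.2⟩

lemma firstLetter_of_mem_boundaryOf {C : Set (FreeGroup B)}
    (hC : IsComponentOf B {1} C) {ξ η : Boundary B}
    (hξ : ξ ∈ boundaryOf B C) (hη : η ∈ boundaryOf B C) : ξ.1 0 = η.1 0 := by
  obtain ⟨v, hv⟩ := comp_head hC
  obtain ⟨m, hm⟩ := hξ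
  obtain ⟨m', hm'⟩ := hη
  have h1 := (hv _ (hm (m + 1) (by omega))).2
  have h2 := (hv _ (hm' (m' + 1) (by omega))).2
  rw [toWord_prefixOf, List.ofFn_succ] at h1 h2
  simp only [List.head?_cons] at h1 h2
  have := h1.trans h2.symm
  simpa using this

lemma constOn_firstLetter (x : B × Bool) :
    ConstOnComponents B {1} (fun ξ => if ξ.1 0 = x then (1 : ℤ) else 0) := by
  intro C hC ξ hξ η hη
  have h := firstLetter_of_mem_boundaryOf hC hξ hη
  simp only [h]

lemma continuous_firstLetter (x : B × Bool) :
    Continuous (fun ξ : Boundary B => if ξ.1 0 = x then (1 : ℤ) else 0) := by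
  have h1 : Continuous (fun ξ : Boundary B => ξ.1 0) :=
    (continuous_apply 0).comp continuous_subtype_val
  have : DiscreteTopology (B × Bool) := ⟨rfl⟩
  exact (continuous_of_discreteTopology (α := B × Bool)
    (f := fun y => if y = x then (1 : ℤ) else 0)).comp h1

lemma exists_depth [Fintype B] (hB : 2 ≤ Fintype.card B) (σ : Boundary B → ℤ)
    (hσ : Continuous σ) :
    ∃ N : ℕ, 1 ≤ N ∧ ∀ ξ η : Boundary B, (∀ i, i < N → ξ.1 i = η.1 i) → σ ξ = σ η := by
  classical
  have hdisc : DiscreteTopology (B × Bool) := ⟨rfl⟩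
  -- the open sets U N
  set U : ℕ → Set (Boundary B) :=
    fun N => {ξ | ∀ η : Boundary B, (∀ i, i < N → η.1 i = ξ.1 i) → σ η = σ ξ} with hU
  have hVopen : ∀ (N : ℕ) (ξ : Boundary B),
      IsOpen {η : Boundary B | ∀ i, i < N → η.1 i = ξ.1 i} := by
    intro N ξ
    have : {η : Boundary B | ∀ i, i < N → η.1 i = ξ.1 i}
        = ⋂ i ∈ Finset.range N, {η : Boundary B | η.1 i = ξ.1 i} := by
      ext η
      simp [Finset.mem_range]
    rw [this]
    apply isOpen_biInter_finset
    intro i _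
    have hc : Continuous (fun η : Boundary B => η.1 i) :=
      (continuous_apply i).comp continuous_subtype_val
    exact IsOpen.preimage hc (isOpen_discrete {ξ.1 i})
  have hUopen : ∀ N, IsOpen (U N) := by
    intro N
    rw [isOpen_iff_mem_nhds]
    intro ξ hξ
    apply Filter.mem_of_superset ((hVopen N ξ).mem_nhds (by intro i hi; rfl))
    intro η hη η' hη'
    have h1 : ∀ i, i < N → η'.1 i = ξ.1 i := fun i hi => (hη' i hi).trans (hη i hi)
    exact (hξ η' h1).trans (hξ η hη).symm
  have hmono : ∀ {N M : ℕ}, N ≤ M → U N ⊆ U M := by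
    intro N M hNM ξ hξ η hη
    exact hξ η fun i hi => hη i (lt_of_lt_of_le hi hNM)
  -- pointwise: every ξ lies in some U N
  have hpt : ∀ ξ : Boundary B, ∃ N, ξ ∈ U N := by
    intro ξ
    have hmemn : {σ ξ} ∈ nhds (σ ξ) := IsOpen.mem_nhds (isOpen_discrete _) rfl
    have hnhds : σ ⁻¹' {σ ξ} ∈ nhds ξ := hσ.continuousAt.preimage_mem_nhds hmemn
    rw [nhds_induced, Filter.mem_comap] at hnhds
    obtain ⟨t, ht, hts⟩ := hnhds
    rw [nhds_pi, Filter.mem_pi] at ht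
    obtain ⟨I, hIfin, u, hu, hut⟩ := ht
    obtain ⟨N, hN⟩ := hIfin.bddAbove
    refine ⟨N + 1, fun η hη => ?_⟩
    have : η.1 ∈ Set.pi I u := by
      intro i hi
      have hiN : i < N + 1 := Nat.lt_succ_of_le (hN hi)
      rw [hη i hiN]
      exact mem_of_mem_nhds (hu i)
    exact hts (hut this)
  -- compactness
  have hcompPi : CompactSpace (∀ _ : ℕ, B × Bool) := by infer_instance
  have hclosed : IsClosed {s : ℕ → B × Bool | ∀ k, s (k + 1) ≠ ((s k).1, !(s k).2)} := by
    have heq : {s : ℕ → B × Bool | ∀ k, s (k + 1) ≠ ((s k).1, !(s k).2)}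
        = ⋂ k, (fun s : ℕ → B × Bool => (s (k + 1), s k)) ⁻¹'
            {p : (B × Bool) × (B × Bool) | p.1 ≠ (p.2.1, !p.2.2)} := by
      ext s
      simp [Set.mem_iInter, Set.mem_preimage]
    rw [heq]
    refine isClosed_iInter fun k => IsClosed.preimage ?_ (isClosed_discrete _)
    exact (continuous_apply (k + 1)).prodMk (continuous_apply k)
  have hcomp : CompactSpace (Boundary B) := isCompact_iff_compactSpace.1 hclosed.isCompact
  have hcover : Set.univ ⊆ ⋃ N, U N := by
    intro ξ _
    obtain ⟨N, hN⟩ := hpt ξ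
    exact Set.mem_iUnion.2 ⟨N, hN⟩
  obtain ⟨J, hJ⟩ := isCompact_univ.elim_finite_subcover U hUopen hcover
  by_cases hJne : J.Nonempty
  · obtain ⟨M, hM, hMmax⟩ := J.exists_max_image id hJne
    refine ⟨M + 1, by omega, fun ξ η hagree => ?_⟩
    have hξ : ξ ∈ U (M + 1) := by
      obtain ⟨N, hN, hξN⟩ := Set.mem_iUnion₂.1 (hJ (Set.mem_univ ξ))
      exact hmono (by have := hMmax N hN; simp at this; omega) hξN
    exact (hξ η fun i hi => (hagree i hi).symm).symm
  · exfalso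
    have hBne : Nonempty B := Fintype.card_pos_iff.1 (by omega)
    obtain ⟨b⟩ := hBne
    have ξ0 : Boundary B := ⟨fun _ => (b, true), by intro k; simp⟩
    have := hJ (Set.mem_univ ξ0)
    rw [Finset.not_nonempty_iff_eq_empty.1 hJne] at this
    simp at this
end Aux4
section Aux5
set_option linter.unusedSectionVars false
variable {B : Type} [DecidableEq B]

/-- Reducedness of a finite word. -/
def Rd {N' : ℕ} (s : Fin (N' + 1) → B × Bool) : Prop :=
  ∀ (i : ℕ) (h : i + 1 < N' + 1), s ⟨i + 1, h⟩ ≠ flipL (s ⟨i, by omega⟩)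

open Classical in
/-- Coefficient attached to a finite word. -/
noncomputable def cV [Nontrivial B] (σ : Boundary B → ℤ) {N' : ℕ}
    (s : Fin (N' + 1) → B × Bool) : ℤ :=
  if h : Rd s then σ (extPt s h) else 0

/-- First-letter indicator function attached to a finite word. -/
noncomputable def τS {N' : ℕ} (s : Fin (N' + 1) → B × Bool) : Boundary B → ℤ :=
  fun ξ => if ξ.1 0 = s (Fin.last N') then 1 else 0

/-- Group element attached to a finite word. -/
def gS {N' : ℕ} (s : Fin (N' + 1) → B × Bool) : FreeGroup B :=
  (FreeGroup.mk (List.ofFn fun i : Fin N' => s i.castSucc))⁻¹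

lemma hkey {N' : ℕ} (s : Fin (N' + 1) → B × Bool) (hs : Rd s) (ζ : Boundary B) :
    τS s (actB B (gS s) ζ)
      = if (∀ (i : ℕ) (h : i < N' + 1), ζ.1 i = s ⟨i, h⟩) then 1 else 0 := by
  classical
  set l : List (B × Bool) := List.ofFn fun i : Fin N' => s i.castSucc with hldef
  set x : B × Bool := s (Fin.last N') with hxdef
  have hof : RedList (List.ofFn s) := by
    rw [RedList, List.Chain', List.isChain_iff_getElem]
    intro i hi
    simp only [List.length_ofFn] at hi
    rw [List.getElem_ofFn, List.getElem_ofFn]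
    exact hs i (by omega)
  have hsplit : List.ofFn s = l ++ [x] := by
    rw [hldef, hxdef, List.ofFn_succ', List.concat_eq_append]
  have hl2 : RedList (l ++ [x]) := hsplit ▸ hof
  have hl : RedList l := (List.isChain_append.1 hl2).1
  have hact : actB B (gS s) ζ = fld ζ l := actB_mk_inv l hl ζ
  have hlen : l.length = N' := by simp [hldef]
  have hg : ∀ (i : ℕ) (h1 : i < l.length + 1) (h2 : i < N' + 1),
      (l ++ [x]).get ⟨i, by simpa using h1⟩ = s ⟨i, h2⟩ := by
    intro i h1 h2
    have h3 : i < (List.ofFn s).length := by simpa using h2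
    have h4 := List.get_of_eq hsplit ⟨i, h3⟩
    rw [List.get_ofFn] at h4
    exact h4.symm
  have hiff : ((fld ζ l).1 0 = x) ↔ (∀ (i : ℕ) (h : i < N' + 1), ζ.1 i = s ⟨i, h⟩) := by
    rw [fld_key l x hl2 ζ]
    constructor
    · intro h i hi
      have h1 : i < l.length + 1 := by omega
      exact (h i h1).trans (hg i h1 hi)
    · intro h i h1
      have hi : i < N' + 1 := by omega
      exact (h i hi).trans (hg i h1 hi).symm
  rw [τS, hact, if_congr hiff rfl rfl]

lemma hmain [Fintype B] [Nontrivial B] (σ : Boundary B → ℤ) {N' : ℕ}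
    (hNdep : ∀ ξ η : Boundary B, (∀ i, i < N' + 1 → ξ.1 i = η.1 i) → σ ξ = σ η)
    (ζ : Boundary B) :
    σ ζ = ∑ s : Fin (N' + 1) → B × Bool, cV σ s * τS s (actB B (gS s) ζ) := by
  classical
  set t : Fin (N' + 1) → B × Bool := fun i => ζ.1 i with htdef
  have ht : Rd t := fun i h => ζ.2 i
  have hsum : ∑ s : Fin (N' + 1) → B × Bool, cV σ s * τS s (actB B (gS s) ζ)
      = cV σ t * τS t (actB B (gS t) ζ) := by
    apply Finset.sum_eq_single t
    · intro s _ hst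
      by_cases hRs : Rd s
      · rw [hkey s hRs ζ, if_neg, mul_zero]
        intro hP
        exact hst (funext fun i => (hP i.1 i.2).symm)
      · rw [cV, dif_neg hRs, zero_mul]
    · intro h
      exact absurd (Finset.mem_univ t) h
  rw [hsum, hkey t ht ζ, if_pos (fun i h => rfl), mul_one, cV, dif_pos ht]
  apply hNdep
  intro i hi
  rw [extPt_eq t ht i hi]
end Aux5
end DecompPaper

open DecompPaper
/-- Lemma `image`: the submodule `B¹ = d C⁰` of `C¹` is generated
as a right `ℤ[F]`-module by the coboundaries `dσ` of continuous functions
`σ : ∂F → ℤ` that are constant on `∂C` for every connected component `C` of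
`T ∖ {e}`.  (Equalities between elements of `C¹` are evaluated on oriented lines;
`dσ(ξ, η) = σ(η) − σ(ξ)` and `(f · g)(ξ, η) = f(g·ξ, g·η)`.) -/
theorem coboundaries_generated_by_whitehead_graph_at_identity
    (B : Type) [Fintype B] [DecidableEq B] (hB : 2 ≤ Fintype.card B)
    (r : ℕ) (w : Fin r → FreeGroup B) (hw : ∀ i, w i ≠ 1) (hmal : Malnormal B w)
    (σ : Boundary B → ℤ) (hσ : Continuous σ) :
    ∃ (m : ℕ) (c : Fin m → ℤ) (τ : Fin m → Boundary B → ℤ)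
      (g : Fin m → FreeGroup B),
      (∀ i, Continuous (τ i)) ∧
      (∀ i, ConstOnComponents B {(1 : FreeGroup B)} (τ i)) ∧
      ∀ ξ η, IsLine B w ξ η →
        σ η - σ ξ = ∑ i, c i * (τ i (actB B (g i) η) - τ i (actB B (g i) ξ)) := by
  classical
  have hnt : Nontrivial B := Fintype.one_lt_card_iff_nontrivial.1 (by omega)
  obtain ⟨N, hN1, hNdep⟩ := exists_depth hB σ hσ
  obtain ⟨N', rfl⟩ : ∃ M, N = M + 1 := ⟨N - 1, by omega⟩
  let e : Fin (Fintype.card (Fin (N' + 1) → B × Bool)) ≃ (Fin (N' + 1) → B × Bool) :=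
    (Fintype.equivFin _).symm
  refine ⟨Fintype.card (Fin (N' + 1) → B × Bool),
    fun i => cV σ (e i), fun i => τS (e i), fun i => gS (e i), ?_, ?_, ?_⟩
  · intro i
    exact continuous_firstLetter _
  · intro i
    exact constOn_firstLetter _
  · intro ξ η _
    rw [hmain σ hNdep ξ, hmain σ hNdep η, ← Finset.sum_sub_distrib,
      ← Equiv.sum_comp e
        (fun s => cV σ s * τS s (actB B (gS s) η) - cV σ s * τS s (actB B (gS s) ξ))]
    exact Finset.sum_congr rfl (fun i _ => (mul_sub _ _ _).symm)
end
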